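/- Let λ > 0, β ∈ ℝ^p, θ ∈ ℝ^n. Assume Ω(β) and Ω*(X^⊤θ) are finite and that the supremum defining f*(−λθ) is attained at some z₀ ∈ ℝ^n. Define Ω̃(β, θ) = Ω(β) + Ω*(X^⊤θ) − ⟨X^⊤θ, β⟩ (which is nonnegative). If f is U-convex for a function U : ℝ^n → [0, ∞) with U(0) = 0, then λΩ̃(β, θ) + U(Xβ − z₀) ≤ Gap_λ(β, θ); if f is V-smooth for a function V : ℝ^n → [0, ∞) with V(0) = 0, then Gap_λ(β, θ) ≤ λΩ̃(β, θ) + V(Xβ − z₀). -/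

import Mathlib

open scoped RealInnerProductSpace

noncomputable section

abbrev Vec (d : ℕ) := EuclideanSpace ℝ (Fin d)

/-- Matrix–vector product, landing in Euclidean space. -/
def mv {a b : ℕ} (M : Matrix (Fin a) (Fin b) ℝ) (v : Vec b) : Vec a := WithLp.toLp 2 (M.mulVec v)

/-- Fenchel conjugate of a real-valued function, with values in `EReal`. -/
noncomputable def rconj {d : ℕ} (f : Vec d → ℝ) (u : Vec d) : EReal :=
  ⨆ x, ((⟪u, x⟫ - f x : ℝ) : EReal)

/-- Fenchel conjugate of an `EReal`-valued function. -/
noncomputable def econj {d : ℕ} (g : Vec d → EReal) (u : Vec d) : EReal :=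
  ⨆ x, (((⟪u, x⟫ : ℝ) : EReal) - g x)

lemma inner_mv_transpose {n p : ℕ} (X : Matrix (Fin n) (Fin p) ℝ) (θ : Vec n) (β : Vec p) :
    ⟪mv X.transpose θ, β⟫ = ⟪θ, mv X β⟫ := by
  simp only [mv, PiLp.inner_apply, RCLike.inner_apply, starRingEnd_apply, star_trivial,
    Matrix.mulVec, dotProduct, Matrix.transpose_apply, Finset.sum_mul, Finset.mul_sum]
  rw [Finset.sum_comm]
  congr 1; ext i; congr 1; ext j; ring

/-- bounds on the duality gap.
`Ω(β) = Ωβ` and `Ω*(Xᵀθ) = Ωs` are finite, and the supremum defining `f*(-λθ)` is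
attained at `z₀` (so that `f*(-λθ) = ⟪-λθ, z₀⟫ - f z₀`).  With
`Ω̃(β,θ) = Ωβ + Ωs - ⟪Xᵀθ, β⟫` (nonnegative) and
`Gap_λ(β,θ) = f(Xβ) + f*(-λθ) + λ(Ωβ + Ωs)`:
if `f` is `U`-convex then `λ Ω̃ + U(Xβ - z₀) ≤ Gap`,
and if `f` is `V`-smooth then `Gap ≤ λ Ω̃ + V(Xβ - z₀)`. -/
theorem stmt1 {n p : ℕ} (X : Matrix (Fin n) (Fin p) ℝ)
    (f : Vec n → ℝ) (f' : Vec n → Vec n)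
    (hdiff : ∀ x, HasGradientAt f (f' x) x)
    (hconv : ConvexOn ℝ Set.univ f)
    (Ω : Vec p → EReal)
    (lam : ℝ) (hlam : 0 < lam)
    (β : Vec p) (θ : Vec n)
    (Ωβ Ωs : ℝ)
    (hΩβ : Ω β = (Ωβ : EReal))
    (hΩs : econj Ω (mv X.transpose θ) = (Ωs : EReal))
    (z₀ : Vec n)
    (hatt : rconj f ((-lam) • θ) = ((⟪(-lam) • θ, z₀⟫ - f z₀ : ℝ) : EReal)) :
    0 ≤ Ωβ + Ωs - ⟪mv X.transpose θ, β⟫ ∧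
    ((∀ U : Vec n → ℝ, U 0 = 0 → (∀ u, 0 ≤ U u) →
      (∀ a z : Vec n, U (z - a) ≤ f z - f a - ⟪f' a, z - a⟫) →
      lam * (Ωβ + Ωs - ⟪mv X.transpose θ, β⟫) + U (mv X β - z₀)
        ≤ f (mv X β) + (⟪(-lam) • θ, z₀⟫ - f z₀) + lam * (Ωβ + Ωs))) ∧
    ((∀ V : Vec n → ℝ, V 0 = 0 → (∀ u, 0 ≤ V u) →
      (∀ a z : Vec n, f z - f a - ⟪f' a, z - a⟫ ≤ V (z - a)) →
      f (mv X β) + (⟪(-lam) • θ, z₀⟫ - f z₀) + lam * (Ωβ + Ωs)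
        ≤ lam * (Ωβ + Ωs - ⟪mv X.transpose θ, β⟫) + V (mv X β - z₀))) := by
  -- nonnegativity of Ω̃
  have hnn : 0 ≤ Ωβ + Ωs - ⟪mv X.transpose θ, β⟫ := by
    have h1 : (((⟪mv X.transpose θ, β⟫ : ℝ) : EReal) - Ω β) ≤ econj Ω (mv X.transpose θ) :=
      le_iSup (fun x => (((⟪mv X.transpose θ, x⟫ : ℝ) : EReal) - Ω x)) β
    rw [hΩβ, hΩs, ← EReal.coe_sub, EReal.coe_le_coe_iff] at h1
    linarith
  -- z₀ is a global max of g z = ⟪-λθ, z⟫ - f z, hence f' z₀ = -λ θ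
  have hmax : ∀ z : Vec n, ⟪(-lam) • θ, z⟫ - f z ≤ ⟪(-lam) • θ, z₀⟫ - f z₀ := by
    intro z
    have h1 : ((⟪(-lam) • θ, z⟫ - f z : ℝ) : EReal) ≤ rconj f ((-lam) • θ) :=
      le_iSup (fun x => ((⟪(-lam) • θ, x⟫ - f x : ℝ) : EReal)) z
    rw [hatt, EReal.coe_le_coe_iff] at h1
    exact h1
  have hgrad : f' z₀ = (-lam) • θ := by
    set c : Vec n := (-lam) • θ with hc
    have hD : HasFDerivAt (fun z : Vec n => ⟪c, z⟫ - f z)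
        ((InnerProductSpace.toDual ℝ (Vec n) c : Vec n →L[ℝ] ℝ)
          - (InnerProductSpace.toDual ℝ (Vec n) (f' z₀) : Vec n →L[ℝ] ℝ)) z₀ := by
      have h1 : HasFDerivAt (fun z : Vec n => ⟪c, z⟫)
          ((InnerProductSpace.toDual ℝ (Vec n) c : Vec n →L[ℝ] ℝ)) z₀ := by
        have heq : (fun z : Vec n => ⟪c, z⟫)
            = fun z => (InnerProductSpace.toDual ℝ (Vec n) c : Vec n →L[ℝ] ℝ) z := by
          funext z; simp [InnerProductSpace.toDual_apply_apply]
        rw [heq]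
        exact (InnerProductSpace.toDual ℝ (Vec n) c : Vec n →L[ℝ] ℝ).hasFDerivAt
      exact h1.sub ((hdiff z₀).hasFDerivAt)
    have hlm : IsLocalMax (fun z : Vec n => ⟪c, z⟫ - f z) z₀ :=
      Filter.Eventually.of_forall hmax
    have h0 := hlm.hasFDerivAt_eq_zero hD
    have : InnerProductSpace.toDual ℝ (Vec n) c = InnerProductSpace.toDual ℝ (Vec n) (f' z₀) :=
      sub_eq_zero.mp h0
    exact ((InnerProductSpace.toDual ℝ (Vec n)).injective this).symm
  have hip : ⟪mv X.transpose θ, β⟫ = ⟪θ, mv X β⟫ := inner_mv_transpose X θ β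
  refine ⟨hnn, ?_, ?_⟩
  · intro U _ _ hU
    have h := hU z₀ (mv X β)
    rw [hgrad] at h
    have h2 : ⟪(-lam) • θ, mv X β - z₀⟫ = -lam * ⟪θ, mv X β⟫ + lam * ⟪θ, z₀⟫ := by
      rw [inner_sub_right, real_inner_smul_left, real_inner_smul_left]; ring
    have h3 : ⟪(-lam) • θ, z₀⟫ = -lam * ⟪θ, z₀⟫ := real_inner_smul_left _ _ _
    rw [h2] at h
    rw [hip, h3]
    linarith
  · intro V _ _ hV
    have h := hV z₀ (mv X β)
    rw [hgrad] at h
    have h2 : ⟪(-lam) • θ, mv X β - z₀⟫ = -lam * ⟪θ, mv X β⟫ + lam * ⟪θ, z₀⟫ := by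
      rw [inner_sub_right, real_inner_smul_left, real_inner_smul_left]; ring
    have h3 : ⟪(-lam) • θ, z₀⟫ = -lam * ⟪θ, z₀⟫ := real_inner_smul_left _ _ _
    rw [h2] at h
    rw [hip, h3]
    linarith

end
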